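/- Let S be a locally compact second countable group with left Haar measure λ, and let (X, μ) be a σ-finite standard measure space with a measurable S-action that is nonsingular in the joint sense: for every μ-null set N ⊆ X, the set {(s, x) ∈ S × X : s·x ∈ N} is (λ × μ)-null. Let Γ be a countable group together with a homomorphism α : Γ → S, through which Γ acts on X and on S (by left translation s ↦ α(γ)s). Let (Z, ζ) be a σ-finite standard measure space with a measurable, measure-class-preserving Γ-action, let V be a standard Borel space with a measurable Γ-action, and let φ : X × Z → V be a measurable map satisfying φ(γ·x, γ·z) = γ·φ(x, z) for every γ ∈ Γ and (μ × ζ)-almost every (x, z). Then for μ-almost every x ∈ X, the map φ̂_x : S × Z → V defined by φ̂_x(s, z) = φ(s·x, z) satisfies φ̂_x(α(γ)s, γ·z) = γ·φ̂_x(s, z) for every γ ∈ Γ and (λ × ζ)-almost every (s, z). -/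

import Mathlib

open MeasureTheory

/-- Lifting lemma: given a jointly nonsingular measurable `S`-action on `(X, μ)`, a countable
group `Γ` mapping to `S` via `α`, a measure-class-preserving `Γ`-action on `(Z, ζ)`, a Borel
`Γ`-space `V`, and a measurable map `φ : X × Z → V` which is a.e. `Γ`-equivariant, for
`μ`-a.e. `x` the lifted map `φ̂ₓ(s, z) = φ(s·x, z)` is a.e. `Γ`-equivariant on `S × Z`. -/
theorem lifting_lemma
    (S : Type*) [Group S] [TopologicalSpace S] [IsTopologicalGroup S]
    [LocallyCompactSpace S] [SecondCountableTopology S]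
    [MeasurableSpace S] [BorelSpace S]
    (lam : Measure S) [lam.IsHaarMeasure]
    (X : Type*) [MeasurableSpace X] [StandardBorelSpace X]
    (μ : Measure X) [SigmaFinite μ]
    [MulAction S X]
    (hXmeas : Measurable fun p : S × X => p.1 • p.2)
    (hns : ∀ N : Set X, μ N = 0 → (lam.prod μ) {p : S × X | p.1 • p.2 ∈ N} = 0)
    (Γ : Type*) [Group Γ] [Countable Γ]
    (α : Γ →* S)
    (Z : Type*) [MeasurableSpace Z] [StandardBorelSpace Z]
    (ζ : Measure Z) [SigmaFinite ζ]
    [MulAction Γ Z]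
    (hZmeas : ∀ γ : Γ, Measurable fun z : Z => γ • z)
    (hZqmp : ∀ γ : Γ, Measure.QuasiMeasurePreserving (fun z : Z => γ • z) ζ ζ)
    (V : Type*) [MeasurableSpace V] [StandardBorelSpace V]
    [MulAction Γ V]
    (hVmeas : ∀ γ : Γ, Measurable fun v : V => γ • v)
    (φ : X × Z → V) (hφmeas : Measurable φ)
    (hφ : ∀ γ : Γ, ∀ᵐ p : X × Z ∂(μ.prod ζ), φ (α γ • p.1, γ • p.2) = γ • φ p) :
    ∀ᵐ x ∂μ, ∀ γ : Γ, ∀ᵐ q : S × Z ∂(lam.prod ζ),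
      φ ((α γ * q.1) • x, γ • q.2) = γ • φ (q.1 • x, q.2) := by
  rw [ae_all_iff]
  intro γ
  letI := upgradeStandardBorel V
  -- the bad set
  set A : Set (X × Z) := {p | ¬ φ (α γ • p.1, γ • p.2) = γ • φ p} with hAdef
  have hAmeas : MeasurableSet A := by
    have h1 : Measurable fun p : X × Z => φ (α γ • p.1, γ • p.2) :=
      hφmeas.comp ((hXmeas.comp (measurable_const.prodMk measurable_fst)).prodMk
        ((hZmeas γ).comp measurable_snd))
    have h2 : Measurable fun p : X × Z => γ • φ p := (hVmeas γ).comp hφmeas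
    have : MeasurableSet {p : X × Z | φ (α γ • p.1, γ • p.2) = γ • φ p} := by
      have : {p : X × Z | φ (α γ • p.1, γ • p.2) = γ • φ p}
          = (fun p : X × Z => (φ (α γ • p.1, γ • p.2), γ • φ p)) ⁻¹' {v : V × V | v.1 = v.2} := by
        rfl
      rw [this]
      exact (h1.prodMk h2) (isClosed_eq continuous_fst continuous_snd).measurableSet
    exact this.compl
  have hA0 : (μ.prod ζ) A = 0 := by
    have := hφ γ
    rwa [ae_iff] at this
  -- slices over z are null for a.e. z
  have hswapA : (ζ.prod μ) (Prod.swap ⁻¹' A) = 0 := by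
    have : (ζ.prod μ) (Prod.swap ⁻¹' A) = ((μ.prod ζ).map Prod.swap) (Prod.swap ⁻¹' A) := by
      rw [Measure.prod_swap]
    rw [this, Measure.map_apply measurable_swap (hAmeas.preimage measurable_swap)]
    rwa [← Set.preimage_comp, Prod.swap_swap_eq, Set.preimage_id]
  have hslices : ∀ᵐ z ∂ζ, μ {x | (x, z) ∈ A} = 0 := by
    have := (Measure.measure_prod_null (μ := ζ) (ν := μ) (hAmeas.preimage measurable_swap)).1 hswapA
    filter_upwards [this] with z hz
    simpa [Set.preimage, Prod.swap] using hz
  -- the bad set in (S × X) × Z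
  set B : Set ((S × X) × Z) := {q | (q.1.1 • q.1.2, q.2) ∈ A} with hBdef
  have hBmeas : MeasurableSet B :=
    hAmeas.preimage ((hXmeas.comp measurable_fst).prodMk measurable_snd)
  have hB0 : ((lam.prod μ).prod ζ) B = 0 := by
    have hswapB : (ζ.prod (lam.prod μ)) (Prod.swap ⁻¹' B) = 0 := by
      rw [Measure.measure_prod_null (hBmeas.preimage measurable_swap)]
      filter_upwards [hslices] with z hz
      have : Prod.mk z ⁻¹' (Prod.swap ⁻¹' B) = {p : S × X | p.1 • p.2 ∈ {x | (x, z) ∈ A}} := rfl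
      rw [this]
      exact hns _ hz
    calc ((lam.prod μ).prod ζ) B
        = ((ζ.prod (lam.prod μ)).map Prod.swap) B := by rw [Measure.prod_swap]
      _ = (ζ.prod (lam.prod μ)) (Prod.swap ⁻¹' B) := by
          rw [Measure.map_apply measurable_swap hBmeas]
      _ = 0 := hswapB
  -- transfer to X × (S × Z)
  set e : X × (S × Z) → (S × X) × Z :=
    fun r => ((r.2.1, r.1), r.2.2) with hedef
  have he : MeasurePreserving e (μ.prod (lam.prod ζ)) ((lam.prod μ).prod ζ) := by
    have h1 : MeasurePreserving (MeasurableEquiv.prodAssoc.symm : X × (S × Z) ≃ᵐ (X × S) × Z)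
        (μ.prod (lam.prod ζ)) ((μ.prod lam).prod ζ) :=
      (measurePreserving_prodAssoc μ lam ζ).symm _
    have h2 : MeasurePreserving (fun r : (X × S) × Z => ((r.1.2, r.1.1), r.2))
        ((μ.prod lam).prod ζ) ((lam.prod μ).prod ζ) :=
      (Measure.measurePreserving_swap).prod (MeasurePreserving.id ζ)
    exact h2.comp h1
  have hC0 : (μ.prod (lam.prod ζ)) (e ⁻¹' B) = 0 := by
    rw [he.measure_preimage hBmeas.nullMeasurableSet, hB0]
  have hCmeas : MeasurableSet (e ⁻¹' B) := hBmeas.preimage he.measurable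
  have hfin := (Measure.measure_prod_null hCmeas).1 hC0
  filter_upwards [hfin] with x hx
  have : (lam.prod ζ) (Prod.mk x ⁻¹' (e ⁻¹' B)) = 0 := hx
  rw [ae_iff]
  convert this using 2
  ext q
  simp only [Set.mem_setOf_eq, Set.mem_preimage, hedef, hBdef, hAdef]
  constructor
  · intro h
    simpa [mul_smul] using h
  · intro h
    simpa [mul_smul] using h
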